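/- Let G be a finite DAG, S ⊆ V a prefix subset, and D_S := { w ∈ S̄ : ∃ u ∈ V, v ∈ S̄ with u,v d-separated given S and u,v d-connected given S ∪ {w} }. Then D_S is descendant-closed within S̄: if w ∈ D_S and x ∈ Des[w], then x ∈ D_S. -/

import Mathlib

open Relation

/-- Undirected adjacency induced by a directed edge relation. -/
def Adjacent {V : Type*} (E : V → V → Prop) (a b : V) : Prop := E a b ∨ E b a

/-- `x` is a collider on the path (vertex list) `p`: both neighboring edges point into `x`. -/
def IsCollider {V : Type*} (E : V → V → Prop) (p : List V) (x : V) : Prop :=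
  ∃ l1 a b l2, p = l1 ++ a :: x :: b :: l2 ∧ E a x ∧ E b x

/-- A path (vertex list) is active given a conditioning set `C`:
every collider is in `C` or has a descendant in `C`, and no non-collider is in `C`. -/
def ActivePath {V : Type*} (E : V → V → Prop) (C : Set V) (p : List V) : Prop :=
  (∀ x ∈ p, IsCollider E p x → ∃ d, ReflTransGen E x d ∧ d ∈ C) ∧
  (∀ x ∈ p, ¬ IsCollider E p x → x ∉ C)

/-- `p` is a path between `u` and `v`: consecutively adjacent, distinct vertices. -/
def IsPathBetween {V : Type*} (E : V → V → Prop) (u v : V) (p : List V) : Prop :=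
  p.Chain' (Adjacent E) ∧ p.Nodup ∧ p.head? = some u ∧ p.getLast? = some v

/-- `u` and `v` are d-connected given `C`. -/
def DConn {V : Type*} (E : V → V → Prop) (C : Set V) (u v : V) : Prop :=
  ∃ p, IsPathBetween E u v p ∧ ActivePath E C p

/-- `u` and `v` are d-separated given `C`. -/
def DSep {V : Type*} (E : V → V → Prop) (C : Set V) (u v : V) : Prop :=
  ¬ DConn E C u v

/-- `S` is a prefix (ancestrally closed) subset. -/
def IsPrefixSet {V : Type*} (E : V → V → Prop) (S : Set V) : Prop :=
  ∀ u v, E u v → v ∈ S → u ∈ S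

/-- Source vertices of the induced subgraph on `T`: vertices of `T` with no parent in `T`. -/
def srcOf {V : Type*} (E : V → V → Prop) (T : Set V) : Set V :=
  {v | v ∈ T ∧ ∀ u, E u v → u ∉ T}

/-- The edge relation is acyclic. -/
def Acyclic {V : Type*} (E : V → V → Prop) : Prop :=
  ∀ v, ¬ TransGen E v v

/-- `p` is a directed path from `u` to `v` (all edges forward). -/
def DirPath {V : Type*} (E : V → V → Prop) (u v : V) (p : List V) : Prop :=
  p.Chain' E ∧ p.head? = some u ∧ p.getLast? = some v

/-- The type-I set `D_S`: vertices `w ∈ S̄` whose conditioning creates a new d-connection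
between some `u ∈ V` and `v ∈ S̄` that were d-separated given `S`. -/
def TypeIset {V : Type*} (E : V → V → Prop) (S : Set V) : Set V :=
  {w | w ∉ S ∧ ∃ u v : V, v ∉ S ∧ DSep E S u v ∧ DConn E (S ∪ {w}) u v}

section Aux

variable {V : Type*} {E : V → V → Prop}

variable {V : Type*} {E : V → V → Prop}

lemma chain'_getElem {l : List V} (h : l.Chain' E) {i : ℕ} (hi : i + 1 < l.length) :
    E l[i] l[i+1] := by
  change List.IsChain _ _ at h
  rw [List.isChain_iff_getElem] at h
  exact h i (by omega)

lemma chain'_reflTransGen {l : List V} (h : l.Chain' E) {i j : ℕ} (hij : i ≤ j)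
    (hj : j < l.length) : ReflTransGen E l[i] l[j] := by
  induction j with
  | zero => cases Nat.le_zero.mp hij; exact ReflTransGen.refl
  | succ n ih =>
    rcases Nat.le_succ_iff_eq_or_le.mp (by omega : i ≤ n + 1) with h1 | h1
    · cases h1; exact ReflTransGen.refl
    · exact Relation.ReflTransGen.tail (ih h1 (by omega)) (chain'_getElem h hj)

lemma chain'_transGen {l : List V} (h : l.Chain' E) {i j : ℕ} (hij : i < j)
    (hj : j < l.length) : TransGen E l[i] l[j] := by
  have h1 : ReflTransGen E l[i] l[j-1] := chain'_reflTransGen h (by omega) (by omega)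
  have h2 : E l[j-1] l[j] := by
    have := chain'_getElem h (i := j - 1) (by omega)
    simpa [Nat.sub_add_cancel (by omega : 1 ≤ j)] using this
  exact Relation.TransGen.trans_right h1 (Relation.TransGen.single h2)

lemma chain'_nodup (hacyc : Acyclic E) {l : List V} (h : l.Chain' E) : l.Nodup := by
  rw [List.nodup_iff_getElem?_ne_getElem?]
  intro i j hij hj
  have hi : i < l.length := by omega
  intro heq
  rw [List.getElem?_eq_getElem hi, List.getElem?_eq_getElem hj] at heq
  have heq2 : l[i] = l[j] := by injection heq
  exact hacyc l[j] (heq2 ▸ chain'_transGen h hij hj)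

lemma chain'_reflTransGen_getLast {l : List V} (h : l.Chain' E) {z x : V}
    (hz : z ∈ l) (hx : l.getLast? = some x) : ReflTransGen E z x := by
  obtain ⟨i, hi, rfl⟩ := List.mem_iff_getElem.mp hz
  have h1 : l[l.length - 1]? = some x := by rw [← List.getLast?_eq_getElem?]; exact hx
  have h2 : l[l.length - 1]'(by omega) = x := by
    rw [List.getElem?_eq_getElem (by omega)] at h1; injection h1
  rw [← h2]
  exact chain'_reflTransGen h (by omega) (by omega)

lemma reflTransGen_exists_chain {a b : V} (h : ReflTransGen E a b) :
    ∃ l : List V, l ≠ [] ∧ l.Chain' E ∧ l.head? = some a ∧ l.getLast? = some b := by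
  induction h with
  | refl => exact ⟨[a], by simp, List.isChain_singleton _, by simp, by simp⟩
  | @tail b c _ e ih =>
    obtain ⟨l, hne, hch, hh, hl⟩ := ih
    refine ⟨l ++ [c], by simp, ?_, by cases l with | nil => simp at hne | cons d t => simpa using hh, by simp⟩
    change List.IsChain _ _
    rw [List.isChain_append]
    refine ⟨hch, List.isChain_singleton _, fun y hy z hz => ?_⟩
    simp only [List.head?_cons, Option.mem_def, Option.some.injEq] at hz
    rw [hl] at hy
    simp only [Option.mem_def, Option.some.injEq] at hy
    subst hz; subst hy; exact e

lemma isCollider_iff_getElem {p : List V} (hnd : p.Nodup) {i : ℕ} (hi : i < p.length) :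
    IsCollider E p p[i] ↔ ∃ (_ : 0 < i) (h2 : i + 1 < p.length),
      E (p[i-1]'(by omega)) p[i] ∧ E (p[i+1]'h2) p[i] := by
  constructor
  · rintro ⟨l1, a, b, l2, hp, ha, hb⟩
    have hlen : p.length = l1.length + 3 + l2.length := by rw [hp]; simp; omega
    have hb1 : l1.length + 1 < p.length := by omega
    have hkey : ∀ k (hk : k < p.length), p[k] = (l1 ++ a :: p[i] :: b :: l2)[k]'(by rw [← hp]; exact hk) := by
      intro k hk
      exact List.getElem_of_eq hp hk
    have hc : p[l1.length+1]'hb1 = p[i] := by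
      rw [hkey _ hb1, List.getElem_append_right (by omega)]
      simp
    have hieq : l1.length + 1 = i := hnd.getElem_inj_iff.mp hc
    refine ⟨by omega, by omega, ?_, ?_⟩
    · have : p[i-1]'(by omega) = a := by
        rw [hkey _ (by omega)]
        have : i - 1 = l1.length := by omega
        simp only [this]
        rw [List.getElem_append_right (by omega)]
        simp
      rw [this]; exact ha
    · have : p[i+1]'(by omega) = b := by
        rw [hkey _ (by omega)]
        have : i + 1 = l1.length + 2 := by omega
        simp only [this]
        rw [List.getElem_append_right (by omega)]
        simp
      rw [this]; exact hb
  · rintro ⟨h1, h2, ha, hb⟩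
    refine ⟨p.take (i-1), p[i-1]'(by omega), p[i+1]'h2, p.drop (i+2), ?_, ha, hb⟩
    have e1 : p.drop (i-1) = p[i-1]'(by omega) :: p.drop ((i-1)+1) := List.drop_eq_getElem_cons (by omega)
    have e1' : (i-1)+1 = i := by omega
    rw [e1'] at e1
    have e2 : p.drop i = p[i] :: p.drop (i+1) := List.drop_eq_getElem_cons (by omega)
    have e3 : p.drop (i+1) = p[i+1]'h2 :: p.drop (i+2) := List.drop_eq_getElem_cons (by omega)
    conv_lhs => rw [← List.take_append_drop (i-1) p, e1, e2, e3]

lemma not_isCollider_head {p : List V} (hnd : p.Nodup) (h0 : 0 < p.length) :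
    ¬ IsCollider E p (p[0]'h0) := by
  intro hc
  obtain ⟨h1, -, -⟩ := (isCollider_iff_getElem hnd h0).mp hc
  omega

lemma not_isCollider_getLast {p : List V} (hnd : p.Nodup) (h0 : 0 < p.length) :
    ¬ IsCollider E p (p[p.length - 1]'(by omega)) := by
  intro hc
  obtain ⟨-, h2, -, -⟩ := (isCollider_iff_getElem hnd (by omega)).mp hc
  omega

lemma isCollider_reverse_imp {p : List V} {z : V} (h : IsCollider E p z) :
    IsCollider E p.reverse z := by
  obtain ⟨l1, a, b, l2, hp, ha, hb⟩ := h
  refine ⟨l2.reverse, b, a, l1.reverse, ?_, hb, ha⟩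
  rw [hp]
  simp

lemma isCollider_reverse {p : List V} {z : V} :
    IsCollider E p.reverse z ↔ IsCollider E p z :=
  ⟨fun h => by have := isCollider_reverse_imp h; rwa [List.reverse_reverse] at this,
   isCollider_reverse_imp⟩

lemma isCollider_append_congr_imp {A B B' : List V} {y z : V} (hz : z ∈ A)
    (hnd : (A ++ y :: B).Nodup) (hnd' : (A ++ y :: B').Nodup)
    (hc : IsCollider E (A ++ y :: B) z) : IsCollider E (A ++ y :: B') z := by
  obtain ⟨i, hiA, rfl⟩ := List.mem_iff_getElem.mp hz
  have hi : i < (A ++ y :: B).length := by simp; omega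
  have hi' : i < (A ++ y :: B').length := by simp; omega
  have key : ∀ (C C' : List V) k (hk : k ≤ A.length) (hk1 : k < (A ++ y :: C).length)
      (hk2 : k < (A ++ y :: C').length), (A ++ y :: C)[k] = (A ++ y :: C')[k] := by
    intro C C' k hk _ _
    rcases Nat.lt_or_ge k A.length with h | h
    · rw [List.getElem_append_left h, List.getElem_append_left h]
    · have hke : k = A.length := by omega
      subst hke
      rw [List.getElem_append_right (le_refl _), List.getElem_append_right (le_refl _)]
      simp
  have hzi : (A ++ y :: B)[i] = A[i] := List.getElem_append_left hiA
  rw [← hzi] at hc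
  obtain ⟨h1, h2, ha, hb⟩ := (isCollider_iff_getElem hnd hi).mp hc
  have hzi' : A[i] = (A ++ y :: B')[i]'hi' := (List.getElem_append_left hiA).symm
  rw [hzi']
  refine (isCollider_iff_getElem hnd' hi').mpr ⟨h1, by simp; omega, ?_, ?_⟩
  · rw [← key B B' (i-1) (by omega) (by simp; omega) (by simp; omega),
        ← key B B' i (by omega) (by simp; omega) (by simp; omega)]
    exact ha
  · rw [← key B B' (i+1) (by omega) (by simp; omega) (by simp; omega),
        ← key B B' i (by omega) (by simp; omega) (by simp; omega)]
    exact hb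

lemma exists_first_mem {σ : List V} (τ : List V) (h : ∃ z ∈ σ, z ∈ τ) :
    ∃ σ₁ y σ₂, σ = σ₁ ++ y :: σ₂ ∧ y ∈ τ ∧ ∀ z ∈ σ₁, z ∉ τ := by
  induction σ with
  | nil => obtain ⟨z, hz, -⟩ := h; cases hz
  | cons a t ih =>
    by_cases ha : a ∈ τ
    · exact ⟨[], a, t, rfl, ha, by simp⟩
    · have h' : ∃ z ∈ t, z ∈ τ := by
        obtain ⟨z, hz, hzt⟩ := h
        rcases List.mem_cons.mp hz with rfl | hm
        · exact absurd hzt ha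
        · exact ⟨z, hm, hzt⟩
      obtain ⟨σ₁, y, σ₂, heq, hy, hdis⟩ := ih h'
      refine ⟨a :: σ₁, y, σ₂, by rw [heq]; rfl, hy, ?_⟩
      intro z hz
      rcases List.mem_cons.mp hz with rfl | hm
      · exact ha
      · exact hdis z hm



def Dset {V : Type*} (E : V → V → Prop) (S : Set V) (x : V) : Set V :=
  {ν | ReflTransGen E ν x ∧ ∀ d, ReflTransGen E ν d → d ∉ S}

lemma chain'_reflTransGen_head {l : List V} (h : l.Chain' E) {z hd : V}
    (hz : z ∈ l) (hh : l.head? = some hd) : ReflTransGen E hd z := by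
  obtain ⟨i, hi, rfl⟩ := List.mem_iff_getElem.mp hz
  have h0 : l[0]'(by omega) = hd := by
    cases l with
    | nil => simp at hi
    | cons a t => simp only [List.head?_cons, Option.some.injEq] at hh; simpa using hh
  rw [← h0]
  exact chain'_reflTransGen h (by omega) hi

lemma sig_construction (hacyc : Acyclic E) (S : Set V) (x : V)
    (p : List V) (u v : V)
    (hch : p.Chain' (Adjacent E)) (hnd : p.Nodup)
    (hhd : p.head? = some u) (hlast : p.getLast? = some v)
    (hnc : ∀ z ∈ p, ¬ IsCollider E p z → z ∉ S)
    (hcol : ∀ z ∈ p, IsCollider E p z → (∃ d, ReflTransGen E z d ∧ d ∈ S) ∨ z ∈ Dset E S x)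
    (hcex : ∃ c ∈ p, c ∈ Dset E S x) :
    ∃ σ, IsPathBetween E u x σ ∧ ActivePath E S σ ∧
      ∀ ν ∈ σ, ν ∈ Dset E S x ∨
        ∃ (i : ℕ) (hi : i < p.length), p[i] = ν ∧
          ∀ (j : ℕ) (hj : j < p.length), p[j] ∈ Dset E S x → i ≤ j := by
  obtain ⟨c, hcp, hcD⟩ := hcex
  obtain ⟨ic, hic, rfl⟩ := List.mem_iff_getElem.mp hcp
  obtain ⟨i₀, hi₀I, hmin⟩ := Nat.lt_wfRel.wf.has_min
    {i | ∃ hi : i < p.length, p[i] ∈ Dset E S x} ⟨ic, hic, hcD⟩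
  obtain ⟨hi₀, hz₀D⟩ := hi₀I
  have hmin' : ∀ (j : ℕ) (hj : j < p.length), p[j] ∈ Dset E S x → i₀ ≤ j :=
    fun j hj hD => not_lt.mp (hmin j ⟨hj, hD⟩)
  obtain ⟨dp, hdpne, hdpch, hdphd, hdplast⟩ := reflTransGen_exists_chain hz₀D.1
  have hdpnd : dp.Nodup := chain'_nodup hacyc hdpch
  obtain ⟨z₀', α, rfl⟩ : ∃ z₀' α, dp = z₀' :: α := by
    cases dp with
    | nil => exact absurd rfl hdpne
    | cons a t => exact ⟨a, t, rfl⟩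
  have hz₀' : z₀' = p[i₀] := by
    simp only [List.head?_cons, Option.some.injEq] at hdphd; exact hdphd
  subst hz₀'
  set σ := p.take (i₀+1) ++ α with hσdef
  have htlen : (p.take (i₀+1)).length = i₀ + 1 := by simp; omega
  have hσlen : σ.length = i₀ + 1 + α.length := by
    simp only [hσdef, List.length_append, htlen]
  have hgetlo : ∀ k (hk : k ≤ i₀), σ[k]'(by omega) = p[k]'(by omega) := by
    intro k hk
    simp only [hσdef]
    rw [List.getElem_append_left (by omega), List.getElem_take]
  have hgethi : ∀ k (hk : i₀ ≤ k) (h2 : k < σ.length),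
      σ[k] = (p[i₀] :: α)[k - i₀]'(by simp; omega) := by
    intro k hk h2
    rcases Nat.eq_or_lt_of_le hk with heq | hklt
    · subst heq
      rw [hgetlo i₀ (le_refl _)]; simp
    · simp only [hσdef]
      rw [List.getElem_append_right (by omega)]
      obtain ⟨m, hm⟩ : ∃ m, k - i₀ = m + 1 := ⟨k - i₀ - 1, by omega⟩
      have h4 : k - (p.take (i₀+1)).length = m := by rw [htlen]; omega
      simp only [h4, hm, List.getElem_cons_succ]
  have hEdp : ∀ k, i₀ ≤ k → ∀ (h2 : k + 1 < σ.length), E σ[k] (σ[k+1]'h2) := by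
    intro k hk h2
    rw [hgethi k hk (by omega), hgethi (k+1) (by omega) h2]
    have hb : (k - i₀) + 1 < (p[i₀] :: α).length := by simp; omega
    have := chain'_getElem hdpch hb
    have he : k + 1 - i₀ = (k - i₀) + 1 := by omega
    simp_rw [he]
    exact this
  have hαmem : ∀ ν ∈ α, ν ∈ Dset E S x := by
    intro ν hν
    refine ⟨chain'_reflTransGen_getLast hdpch (List.mem_cons_of_mem _ hν) hdplast, ?_⟩
    intro d hd
    exact hz₀D.2 d (ReflTransGen.trans
      (chain'_reflTransGen_head hdpch (List.mem_cons_of_mem _ hν) (by simp)) hd)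
  have hdpD : ∀ ν ∈ p[i₀] :: α, ν ∈ Dset E S x := by
    intro ν hν
    rcases List.mem_cons.mp hν with rfl | hm
    · exact hz₀D
    · exact hαmem ν hm
  have hdisj : ∀ ν ∈ p.take (i₀+1), ν ∉ α := by
    intro ν hν hνα
    obtain ⟨k, hk, hkν⟩ := List.mem_iff_getElem.mp hν
    rw [List.getElem_take] at hkν
    have hkb : k < i₀ + 1 := by rw [htlen] at hk; exact hk
    have : i₀ ≤ k := hmin' k (by omega) (hkν ▸ hαmem ν hνα)
    have hki : k = i₀ := by omega
    subst hki
    exact (List.nodup_cons.mp hdpnd).1 (hkν ▸ hνα)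
  have hndσ : σ.Nodup := by
    rw [hσdef, List.nodup_append']
    exact ⟨(List.take_sublist _ _).nodup hnd, (List.nodup_cons.mp hdpnd).2, hdisj⟩
  have hσpos : 0 < σ.length := by omega
  -- head
  have hu : p[0]'(by omega) = u := by
    rw [List.head?_eq_getElem?, List.getElem?_eq_getElem (by omega)] at hhd
    injection hhd
  have hheadσ : σ.head? = some u := by
    rw [List.head?_eq_getElem?, List.getElem?_eq_getElem hσpos, hgetlo 0 (by omega), hu]
  -- last
  have hxlast : (p[i₀] :: α).getLast? = some x := hdplast
  have hxval : (p[i₀] :: α)[α.length]'(by simp) = x := by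
    rw [List.getLast?_eq_getElem?] at hxlast
    have : (p[i₀] :: α).length - 1 = α.length := by simp
    rw [this, List.getElem?_eq_getElem (by simp)] at hxlast
    injection hxlast
  have hlastσ : σ.getLast? = some x := by
    rw [List.getLast?_eq_getElem?, List.getElem?_eq_getElem (by omega)]
    have h1 : σ[σ.length - 1]'(by omega) = x := by
      rw [hgethi (σ.length - 1) (by omega) (by omega)]
      have : σ.length - 1 - i₀ = α.length := by omega
      simp_rw [this, hxval]
    rw [h1]
  -- chain
  have hchσ : σ.Chain' (Adjacent E) := by
    change List.IsChain _ _
    rw [hσdef, List.isChain_append]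
    refine ⟨hch.take _, (hdpch.imp fun a b h => Or.inl h).tail, ?_⟩
    intro y hy b hb
    cases α with
    | nil => simp at hb
    | cons a0 t =>
      simp only [List.head?_cons, Option.mem_def, Option.some.injEq] at hb
      subst hb
      have hyv : y = p[i₀] := by
        rw [List.getLast?_eq_getElem?, List.getElem?_eq_getElem (by omega)] at hy
        have : (p.take (i₀+1))[(p.take (i₀+1)).length - 1]'(by omega) = p[i₀] := by
          simp_rw [htlen]
          rw [List.getElem_take]
          simp only [Nat.add_sub_cancel]
        simp only [Option.mem_def, Option.some.injEq] at hy
        rw [← hy, this]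
      subst hyv
      exact Or.inl (chain'_getElem hdpch (i := 0) (by simp))
  -- status transfer for low indices
  have stat : ∀ k (hk : k < i₀), (IsCollider E σ (σ[k]'(by omega)) ↔ IsCollider E p (p[k]'(by omega))) := by
    intro k hk
    have e0 : σ[k]'(by omega) = p[k]'(by omega) := hgetlo k (by omega)
    have em : σ[k-1]'(by omega) = p[k-1]'(by omega) := hgetlo (k-1) (by omega)
    have ep : σ[k+1]'(by omega) = p[k+1]'(by omega) := hgetlo (k+1) (by omega)
    rw [isCollider_iff_getElem hndσ (by omega), isCollider_iff_getElem hnd (by omega)]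
    constructor
    · rintro ⟨h1, h2, ha, hb⟩
      rw [e0, em] at ha; rw [e0, ep] at hb
      exact ⟨h1, by omega, ha, hb⟩
    · rintro ⟨h1, h2, ha, hb⟩
      rw [← e0, ← em] at ha; rw [← e0, ← ep] at hb
      exact ⟨h1, by omega, ha, hb⟩
  have stat2 : ∀ k (hk : i₀ ≤ k) (h2 : k < σ.length), ¬ IsCollider E σ σ[k] := by
    intro k hk h2 hco
    obtain ⟨h1, hb2, ha, hb⟩ := (isCollider_iff_getElem hndσ h2).mp hco
    exact hacyc σ[k] (TransGen.tail (TransGen.single (hEdp k hk hb2)) hb)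
  refine ⟨σ, ⟨hchσ, hndσ, hheadσ, hlastσ⟩, ⟨?_, ?_⟩, ?_⟩
  · -- colliders have descendants in S
    intro ν hν hcoν
    obtain ⟨k, hk, rfl⟩ := List.mem_iff_getElem.mp hν
    rcases Nat.lt_or_ge k i₀ with hklt | hkge
    · have hcp' : IsCollider E p (p[k]'(by omega)) := (stat k hklt).mp hcoν
      rcases hcol _ (List.getElem_mem _) hcp' with ⟨d, hd1, hd2⟩ | hD
      · exact ⟨d, by rw [hgetlo k (by omega)]; exact hd1, hd2⟩
      · exact absurd (hmin' k (by omega) hD) (by omega)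
    · exact absurd hcoν (stat2 k hkge hk)
  · -- non-colliders not in S
    intro ν hν hncν
    obtain ⟨k, hk, rfl⟩ := List.mem_iff_getElem.mp hν
    rcases Nat.lt_or_ge k i₀ with hklt | hkge
    · have : ¬ IsCollider E p (p[k]'(by omega)) := fun hcp => hncν ((stat k hklt).mpr hcp)
      have := hnc _ (List.getElem_mem _) this
      rwa [hgetlo k (by omega)]
    · have : σ[k] ∈ p[i₀] :: α := by
        rw [hgethi k hkge hk]; exact List.getElem_mem _
      exact (hdpD _ this).2 _ ReflTransGen.refl
  · -- structural property
    intro ν hν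
    rcases List.mem_append.mp hν with hνt | hνα
    · obtain ⟨k, hk, hkν⟩ := List.mem_iff_getElem.mp hνt
      rw [List.getElem_take] at hkν
      rw [htlen] at hk
      exact Or.inr ⟨k, by omega, hkν, fun j hj hD => le_trans (by omega : k ≤ i₀) (hmin' j hj hD)⟩
    · exact Or.inl (hαmem ν hνα)





lemma adjacent_symm {a b : V} (h : Adjacent E a b) : Adjacent E b a :=
  Or.elim h Or.inr Or.inl

lemma mem_S_of_reflTransGen {S : Set V} (hS : IsPrefixSet E S) {a b : V}
    (h : ReflTransGen E a b) (hb : b ∈ S) : a ∈ S := by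
  induction h with
  | refl => exact hb
  | tail _ e ih => exact ih (hS _ _ e hb)

lemma mem_of_getLast?_eq {l : List V} {a : V} (h : l.getLast? = some a) : a ∈ l := by
  rw [List.getLast?_eq_getElem?] at h
  have hne : l ≠ [] := by rintro rfl; simp at h
  have hpos : 0 < l.length := List.length_pos_iff.mpr hne
  rw [List.getElem?_eq_getElem (by omega)] at h
  have : l[l.length - 1]'(by omega) = a := by injection h
  exact this ▸ List.getElem_mem _

lemma head?_append_cons (A : List V) (b : V) (B B' : List V) :
    (A ++ b :: B).head? = (A ++ b :: B').head? := by cases A <;> simp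

theorem typeIset_descendant_closed' {V : Type*} (E : V → V → Prop)
    (hacyc : Acyclic E) (S : Set V) (hS : IsPrefixSet E S)
    (w x : V) (hw : w ∈ TypeIset E S) (hx : ReflTransGen E w x) :
    x ∈ TypeIset E S := by
  obtain ⟨hwS, u, v, hvS, hsep, p, ⟨hch, hnd, hhd, hlst⟩, hact⟩ := hw
  have hxS : x ∉ S := fun h => hwS (mem_S_of_reflTransGen hS hx h)
  -- non-colliders of p are not in S
  have hnc : ∀ z ∈ p, ¬ IsCollider E p z → z ∉ S :=
    fun z hz h hzS => hact.2 z hz h (Or.inl hzS)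
  -- colliders of p
  have hcolp : ∀ z ∈ p, IsCollider E p z →
      (∃ d, ReflTransGen E z d ∧ d ∈ S) ∨ z ∈ Dset E S x := by
    intro z hz hco
    by_cases h : ∃ d, ReflTransGen E z d ∧ d ∈ S
    · exact Or.inl h
    · obtain ⟨d, hd1, hd2⟩ := hact.1 z hz hco
      rcases hd2 with hdS | hdw
      · exact absurd ⟨d, hd1, hdS⟩ h
      · rcases hdw with rfl
        exact Or.inr ⟨hd1.trans hx, fun d' hd' hd'S => h ⟨d', hd', hd'S⟩⟩
  -- existence of a closed collider in Dset
  have hblock : ¬ ActivePath E S p := fun ha => hsep ⟨p, ⟨hch, hnd, hhd, hlst⟩, ha⟩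
  have hcex : ∃ c ∈ p, c ∈ Dset E S x := by
    have hnotA : ¬ (∀ z ∈ p, IsCollider E p z → ∃ d, ReflTransGen E z d ∧ d ∈ S) :=
      fun hA => hblock ⟨hA, hnc⟩
    push_neg at hnotA
    obtain ⟨z, hzp, hzco, hzno⟩ := hnotA
    obtain ⟨d, hd1, hd2⟩ := hact.1 z hzp hzco
    rcases hd2 with hdS | hdw
    · exact absurd hdS (hzno d hd1)
    · rcases hdw with rfl
      exact ⟨z, hzp, hd1.trans hx, fun d' hd' hd'S => (hzno d' hd') hd'S⟩
  -- construct σ : u ~ x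
  obtain ⟨σ, ⟨hchσ, hndσ, hheadσ, hlastσ⟩, hσact, hσP⟩ :=
    sig_construction hacyc S x p u v hch hnd hhd hlst hnc hcolp hcex
  -- construct τ : v ~ x  (via the reversed path)
  have hchr : p.reverse.Chain' (Adjacent E) :=
    (List.isChain_reverse).mpr (hch.imp fun _ _ h => adjacent_symm h)
  have hndr : p.reverse.Nodup := List.nodup_reverse.mpr hnd
  have hhdr : p.reverse.head? = some v := by rw [List.head?_reverse]; exact hlst
  have hlstr : p.reverse.getLast? = some u := by rw [List.getLast?_reverse]; exact hhd
  have hncr : ∀ z ∈ p.reverse, ¬ IsCollider E p.reverse z → z ∉ S :=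
    fun z hz h => hnc z (List.mem_reverse.mp hz) (fun hc => h (isCollider_reverse.mpr hc))
  have hcolr : ∀ z ∈ p.reverse, IsCollider E p.reverse z →
      (∃ d, ReflTransGen E z d ∧ d ∈ S) ∨ z ∈ Dset E S x :=
    fun z hz hc => hcolp z (List.mem_reverse.mp hz) (isCollider_reverse.mp hc)
  have hcexr : ∃ c ∈ p.reverse, c ∈ Dset E S x := by
    obtain ⟨c, hcp, hcD⟩ := hcex
    exact ⟨c, List.mem_reverse.mpr hcp, hcD⟩
  obtain ⟨τ, ⟨hchτ, hndτ, hheadτ, hlastτ⟩, hτact, hτP⟩ :=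
    sig_construction hacyc S x p.reverse v u hchr hndr hhdr hlstr hncr hcolr hcexr
  -- translate τ's structural property to p-indices
  have hτP' : ∀ ν ∈ τ, ν ∈ Dset E S x ∨
      ∃ (i : ℕ) (hi : i < p.length), p[i] = ν ∧
        ∀ (j : ℕ) (hj : j < p.length), p[j] ∈ Dset E S x → j ≤ i := by
    intro ν hν
    rcases hτP ν hν with h | ⟨i', hi', hiv, hminv⟩
    · exact Or.inl h
    · have hi'p : i' < p.length := by simpa using hi'
      refine Or.inr ⟨p.length - 1 - i', by omega, ?_, ?_⟩
      · rw [List.getElem_reverse] at hiv; exact hiv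
      · intro j hj hD
        have hjr : p.length - 1 - j < p.reverse.length := by simp; omega
        have e : (p.reverse)[p.length - 1 - j]'hjr = p[j]'hj := by
          rw [List.getElem_reverse]
          have : p.length - 1 - (p.length - 1 - j) = j := by omega
          simp only [this]
        have := hminv (p.length - 1 - j) hjr (e ▸ hD)
        omega
  -- x is the last element of both σ and τ
  have hxσ : x ∈ σ := mem_of_getLast?_eq hlastσ
  have hxτ : x ∈ τ := mem_of_getLast?_eq hlastτ
  -- first vertex of σ lying on τ
  obtain ⟨σ₁, y, σ₂, hσsplit, hyτ, hdisjστ⟩ := exists_first_mem τ ⟨x, hxσ, hxτ⟩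
  obtain ⟨τ₁, τ₂, hτsplit⟩ := List.append_of_mem hyτ
  have hndτ' := hτsplit ▸ hndτ
  have hndσ' := hσsplit ▸ hndσ
  obtain ⟨hndτ₁, hndyτ₂, hdisτ⟩ := List.nodup_append'.mp hndτ'
  obtain ⟨hndσ₁, hndyσ₂, hdisσ⟩ := List.nodup_append'.mp hndσ'
  have hyτ₁ : y ∉ τ₁ := fun h => hdisτ h (List.mem_cons_self)
  -- y has the key property
  have hyD : y ∈ Dset E S x := by
    rcases hσP y (hσsplit ▸ List.mem_append_right _ (List.mem_cons_self)) with h | ⟨i, hi, hiy, hminσ⟩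
    · exact h
    rcases hτP' y hyτ with h | ⟨i', hi', hi'y, hmaxτ⟩
    · exact h
    obtain ⟨c, hcp, hcD⟩ := hcex
    obtain ⟨jc, hjc, rfl⟩ := List.mem_iff_getElem.mp hcp
    have hii' : i = i' := hnd.getElem_inj_iff.mp (hiy.trans hi'y.symm)
    have h1 := hminσ jc hjc hcD
    have h2 := hmaxτ jc hjc hcD
    have : jc = i := by omega
    subst this
    exact hiy ▸ hcD
  -- the new path ρ
  set ρ := σ₁ ++ y :: τ₁.reverse with hρdef
  have hrev1 : (τ₁ ++ [y]).reverse = y :: τ₁.reverse := by simp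
  have hrevρ : ρ.reverse = τ₁ ++ y :: σ₁.reverse := by simp [hρdef]
  -- chain
  obtain ⟨hchσ₁, hchyσ₂, hbdσ⟩ := List.isChain_append.mp (hσsplit ▸ hchσ)
  obtain ⟨hchτ₁, hchyτ₂, hbdτ⟩ := List.isChain_append.mp (hτsplit ▸ hchτ)
  have hchρ : ρ.Chain' (Adjacent E) := by
    change List.IsChain _ _
    rw [hρdef, List.isChain_append]
    refine ⟨hchσ₁, ?_, ?_⟩
    · rw [← hrev1, List.isChain_reverse]
      refine List.IsChain.imp (fun _ _ h => adjacent_symm h) ?_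
      rw [List.isChain_append]
      exact ⟨hchτ₁, List.isChain_singleton _, fun a ha b hb => by
        simp only [List.head?_cons, Option.mem_def, Option.some.injEq] at hb
        subst hb
        exact hbdτ a ha y (by simp)⟩
    · intro a ha b hb
      simp only [List.head?_cons, Option.mem_def, Option.some.injEq] at hb
      subst hb
      exact hbdσ a ha y (by simp)
  -- nodup
  have hndρ : ρ.Nodup := by
    rw [hρdef, List.nodup_append']
    refine ⟨hndσ₁, ?_, ?_⟩
    · rw [List.nodup_cons]
      exact ⟨fun h => hyτ₁ (List.mem_reverse.mp h), List.nodup_reverse.mpr hndτ₁⟩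
    · intro a ha hmem
      rcases List.mem_cons.mp hmem with rfl | hm
      · exact hdisjστ a ha hyτ
      · exact hdisjστ a ha (hτsplit ▸ List.mem_append_left _ (List.mem_reverse.mp hm))
  -- endpoints
  have hheadρ : ρ.head? = some u := by
    rw [hρdef, head?_append_cons σ₁ y τ₁.reverse σ₂, ← hσsplit]
    exact hheadσ
  have hlastρ : ρ.getLast? = some v := by
    rw [hρdef, List.getLast?_append_of_ne_nil _ (by simp : (y :: τ₁.reverse) ≠ []),
      ← hrev1, List.getLast?_reverse, head?_append_cons τ₁ y [] τ₂, ← hτsplit]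
    exact hheadτ
  -- status transfer
  have htranσ : ∀ z ∈ σ₁, (IsCollider E ρ z ↔ IsCollider E σ z) := by
    intro z hz
    constructor
    · intro h
      rw [hσsplit]
      exact isCollider_append_congr_imp hz (hρdef ▸ hndρ) hndσ' h
    · intro h
      rw [hσsplit] at h
      exact isCollider_append_congr_imp hz hndσ' (hρdef ▸ hndρ) h
  have htranτ : ∀ z ∈ τ₁, (IsCollider E ρ z ↔ IsCollider E τ z) := by
    intro z hz
    have h1 : IsCollider E ρ z ↔ IsCollider E ρ.reverse z := isCollider_reverse.symm
    rw [h1, hrevρ, hτsplit]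
    have hndrr : (τ₁ ++ y :: σ₁.reverse).Nodup := by
      rw [← hrevρ]; exact List.nodup_reverse.mpr hndρ
    exact ⟨fun h => isCollider_append_congr_imp hz hndrr hndτ' h,
      fun h => isCollider_append_congr_imp hz hndτ' hndrr h⟩
  -- membership in ρ
  have hmemρ : ∀ z ∈ ρ, z ∈ σ₁ ∨ z = y ∨ z ∈ τ₁ := by
    intro z hz
    rw [hρdef] at hz
    rcases List.mem_append.mp hz with h | h
    · exact Or.inl h
    · rcases List.mem_cons.mp h with rfl | h
      · exact Or.inr (Or.inl rfl)
      · exact Or.inr (Or.inr (List.mem_reverse.mp h))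
  have hxσ₁ : x ∉ σ₁ := fun h => hdisjστ x h hxτ
  have hxτ₁ : x ∉ τ₁ := by
    intro h
    have hxyτ₂ : x ∈ y :: τ₂ := by
      have := hτsplit ▸ hlastτ
      rw [List.getLast?_append_of_ne_nil _ (by simp : (y :: τ₂) ≠ [])] at this
      exact mem_of_getLast?_eq this
    exact hdisτ h hxyτ₂
  have hmemσ : ∀ z ∈ σ₁, z ∈ σ := fun z hz => hσsplit ▸ List.mem_append_left _ hz
  have hmemτ : ∀ z ∈ τ₁, z ∈ τ := fun z hz => hτsplit ▸ List.mem_append_left _ hz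
  -- final dichotomy
  by_cases hyc : IsCollider E ρ y
  · -- ρ is active given S ∪ {x} : witness for x ∈ TypeIset
    refine ⟨hxS, u, v, hvS, hsep, ρ, ⟨hchρ, hndρ, hheadρ, hlastρ⟩, ?_, ?_⟩
    · intro z hz hzc
      rcases hmemρ z hz with h | h | h
      · obtain ⟨d, hd1, hd2⟩ := hσact.1 z (hmemσ z h) ((htranσ z h).mp hzc)
        exact ⟨d, hd1, Or.inl hd2⟩
      · subst h
        exact ⟨x, hyD.1, Or.inr rfl⟩
      · obtain ⟨d, hd1, hd2⟩ := hτact.1 z (hmemτ z h) ((htranτ z h).mp hzc)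
        exact ⟨d, hd1, Or.inl hd2⟩
    · intro z hz hznc hzmem
      rcases hmemρ z hz with h | h | h
      · have hznS : z ∉ S := hσact.2 z (hmemσ z h) (fun hc => hznc ((htranσ z h).mpr hc))
        rcases hzmem with hzS | hzx
        · exact hznS hzS
        · rcases hzx with rfl
          exact hxσ₁ h
      · exact hznc (h ▸ hyc)
      · have hznS : z ∉ S := hτact.2 z (hmemτ z h) (fun hc => hznc ((htranτ z h).mpr hc))
        rcases hzmem with hzS | hzx
        · exact hznS hzS
        · rcases hzx with rfl
          exact hxτ₁ h
  · -- ρ would be active given S : contradiction with DSep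
    exfalso
    refine hsep ⟨ρ, ⟨hchρ, hndρ, hheadρ, hlastρ⟩, ?_, ?_⟩
    · intro z hz hzc
      rcases hmemρ z hz with h | h | h
      · exact hσact.1 z (hmemσ z h) ((htranσ z h).mp hzc)
      · exact absurd (h ▸ hzc) hyc
      · exact hτact.1 z (hmemτ z h) ((htranτ z h).mp hzc)
    · intro z hz hznc
      rcases hmemρ z hz with h | h | h
      · exact hσact.2 z (hmemσ z h) (fun hc => hznc ((htranσ z h).mpr hc))
      · exact h ▸ hyD.2 y ReflTransGen.refl
      · exact hτact.2 z (hmemτ z h) (fun hc => hznc ((htranτ z h).mpr hc))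

end Aux

/-- `D_S` is descendant-closed: if `w ∈ D_S` and `x ∈ Des[w]` then `x ∈ D_S`. -/
theorem typeIset_descendant_closed {V : Type*} [Fintype V] (E : V → V → Prop)
    (hacyc : Acyclic E) (S : Set V) (hS : IsPrefixSet E S)
    (w x : V) (hw : w ∈ TypeIset E S) (hx : ReflTransGen E w x) :
    x ∈ TypeIset E S :=
  typeIset_descendant_closed' E hacyc S hS w x hw hx
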